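/- Let S₁ := (1/2)(|01⟩⟨01| + |10⟩⟨10| + |11⟩⟨11| − |00⟩⟨00|) acting on ℂ² ⊗ ℂ², and let X₁ := (2/9)|φ₂⁺⟩⟨φ₂⁺| + (1/9)|01⟩⟨01| + (1/9)|10⟩⟨10| + (5/9)|00⟩⟨00|. Then Tr(S₁σ) ≥ 0 for every σ ∈ 𝔄𝔉₂, while Tr(S₁X₁) = −1/6 < 0; consequently X₁ ∉ 𝔄𝔉₂. -/

import Mathlib

open Matrix Kronecker Complex
open scoped ComplexOrder

/-- The canonical maximally entangled vector `|ψ⁺⟩ = (1/√d) ∑ᵢ |ii⟩` on `ℂ^d ⊗ ℂ^d`. -/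
noncomputable def psiPlus (d : ℕ) : (Fin d × Fin d) → ℂ :=
  fun p => if p.1 = p.2 then ((Real.sqrt d)⁻¹ : ℝ) else 0

/-- The fully entangled fraction: the supremum over `d × d` unitaries `V` of
`⟨ψ⁺| (I ⊗ V)† ρ (I ⊗ V) |ψ⁺⟩`. -/
noncomputable def fef (d : ℕ) (ρ : Matrix (Fin d × Fin d) (Fin d × Fin d) ℂ) : ℝ :=
  ⨆ V : Matrix.unitaryGroup (Fin d) ℂ,
    (star (psiPlus d) ⬝ᵥ
      ((((1 : Matrix (Fin d) (Fin d) ℂ) ⊗ₖ (V : Matrix (Fin d) (Fin d) ℂ))ᴴ * ρ *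
        ((1 : Matrix (Fin d) (Fin d) ℂ) ⊗ₖ (V : Matrix (Fin d) (Fin d) ℂ))) *ᵥ psiPlus d)).re

/-- A density matrix: positive semidefinite with unit trace. -/
def IsDensityMatrix {n : Type*} [Fintype n] (ρ : Matrix n n ℂ) : Prop :=
  ρ.PosSemidef ∧ ρ.trace = 1

/-- `ρ` has absolute fully entangled fraction: `F(UρU†) ≤ 1/d` for every unitary `U`. -/
def AbsFEF (d : ℕ) (ρ : Matrix (Fin d × Fin d) (Fin d × Fin d) ℂ) : Prop :=
  ∀ U ∈ Matrix.unitaryGroup (Fin d × Fin d) ℂ, fef d (U * ρ * Uᴴ) ≤ 1 / d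

/-- Basis vector `|ij⟩` of `ℂ^d ⊗ ℂ^d`. -/
def ket (d : ℕ) (i j : Fin d) : (Fin d × Fin d) → ℂ :=
  fun p => if p = (i, j) then 1 else 0

/-- Rank-one projector `|v⟩⟨v|`. -/
def proj {n : Type*} (v : n → ℂ) : Matrix n n ℂ :=
  Matrix.vecMulVec v (star v)

/-- The state `X₁ = (2/9)|φ₂⁺⟩⟨φ₂⁺| + (1/9)|01⟩⟨01| + (1/9)|10⟩⟨10| + (5/9)|00⟩⟨00|`. -/
noncomputable def X₁ : Matrix (Fin 2 × Fin 2) (Fin 2 × Fin 2) ℂ :=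
  (2/9 : ℂ) • proj (psiPlus 2) + (1/9 : ℂ) • proj (ket 2 0 1) +
    (1/9 : ℂ) • proj (ket 2 1 0) + (5/9 : ℂ) • proj (ket 2 0 0)

/-- The witness `S₁ = (1/2)(|01⟩⟨01| + |10⟩⟨10| + |11⟩⟨11| − |00⟩⟨00|)`. -/
noncomputable def S₁ : Matrix (Fin 2 × Fin 2) (Fin 2 × Fin 2) ℂ :=
  (1/2 : ℂ) • (proj (ket 2 0 1) + proj (ket 2 1 0) + proj (ket 2 1 1) - proj (ket 2 0 0))

/-! ### Auxiliary material -/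

noncomputable def cc : ℂ := ((Real.sqrt 2)⁻¹ : ℝ)

lemma cc_mul : cc * cc = 1/2 := by
  unfold cc
  rw [← Complex.ofReal_mul, ← mul_inv, Real.mul_self_sqrt (by norm_num)]
  norm_num

lemma cc_star : (starRingEnd ℂ) cc = cc := by unfold cc; exact Complex.conj_ofReal _

lemma psiPlus_eq_cc : psiPlus 2 = fun p => if p.1 = p.2 then cc else 0 := by
  funext q; simp [psiPlus, cc]

lemma proj_posSemidef {n : Type*} [Fintype n] (v : n → ℂ) : (proj v).PosSemidef := by
  rw [Matrix.posSemidef_iff_dotProduct_mulVec]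
  constructor
  · ext i j
    simp [proj, conjTranspose_apply, vecMulVec_apply, mul_comm]
  · intro x
    have h : star x ⬝ᵥ (proj v) *ᵥ x = star (star v ⬝ᵥ x) * (star v ⬝ᵥ x) := by
      simp only [proj, dotProduct, mulVec, vecMulVec_apply, Finset.mul_sum, Finset.sum_mul,
        star_sum, star_mul', Pi.star_apply, star_star]
      rw [Finset.sum_comm]
      congr 1; ext i; congr 1; ext j; ring
    rw [h]
    exact star_mul_self_nonneg _

lemma smul_posSemidef {n : Type*} [Fintype n] {M : Matrix n n ℂ} (hM : M.PosSemidef)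
    {c : ℝ} (hc : 0 ≤ c) : ((c : ℂ) • M).PosSemidef := by
  rw [Matrix.posSemidef_iff_dotProduct_mulVec]
  constructor
  · have h : ((c : ℂ) • M)ᴴ = (c : ℂ) • M := by
      rw [conjTranspose_smul, hM.1]
      congr 1
      simp [Complex.conj_ofReal]
    exact h
  · intro x
    rw [smul_mulVec, dotProduct_smul, smul_eq_mul]
    exact mul_nonneg (by exact_mod_cast Complex.zero_le_real.mpr hc) ((Matrix.posSemidef_iff_dotProduct_mulVec.mp hM).2 x)

lemma quad_bound {m : Type*} [Fintype m] (ρ : Matrix m m ℂ) (w : m → ℂ) (c : ℝ)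
    (hc : 0 ≤ c) (hw : ∀ p, ‖w p‖ ≤ c) :
    (star w ⬝ᵥ ρ *ᵥ w).re ≤ c ^ 2 * ∑ p, ∑ q, ‖ρ p q‖ := by
  have h1 : ∀ p, ‖(ρ *ᵥ w) p‖ ≤ ∑ q, ‖ρ p q‖ * c := by
    intro p
    refine le_trans (norm_sum_le _ _) (Finset.sum_le_sum fun q _ => ?_)
    rw [norm_mul]
    exact mul_le_mul_of_nonneg_left (hw q) (norm_nonneg _)
  calc (star w ⬝ᵥ ρ *ᵥ w).re ≤ ‖star w ⬝ᵥ ρ *ᵥ w‖ := Complex.re_le_norm _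
    _ ≤ ∑ p, ‖(star w) p * (ρ *ᵥ w) p‖ := norm_sum_le _ _
    _ ≤ ∑ p, c * ∑ q, ‖ρ p q‖ * c := by
        refine Finset.sum_le_sum fun p _ => ?_
        rw [norm_mul]
        refine mul_le_mul ?_ (h1 p) (norm_nonneg _) hc
        simpa using hw p
    _ = c ^ 2 * ∑ p, ∑ q, ‖ρ p q‖ := by
        rw [Finset.mul_sum]
        refine Finset.sum_congr rfl fun p _ => ?_
        rw [Finset.mul_sum, Finset.mul_sum]
        exact Finset.sum_congr rfl fun q _ => by ring

lemma conj_form {m : Type*} [Fintype m] (K ρ : Matrix m m ℂ) (v : m → ℂ) :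
    star v ⬝ᵥ ((Kᴴ * ρ * K) *ᵥ v) = star (K *ᵥ v) ⬝ᵥ ρ *ᵥ (K *ᵥ v) := by
  rw [star_mulVec, ← mulVec_mulVec, ← mulVec_mulVec, dotProduct_mulVec]

lemma psi_entry_le (q : Fin 2 × Fin 2) : ‖psiPlus 2 q‖ ≤ 1 := by
  unfold psiPlus
  split
  · rw [Complex.norm_of_nonneg (by positivity), inv_le_one_iff₀]
    right
    exact Real.one_le_sqrt.mpr (by norm_num)
  · simp

lemma unitary_entry_le {n : Type*} [Fintype n] [DecidableEq n]
    (V : Matrix n n ℂ) (hV : V ∈ Matrix.unitaryGroup n ℂ) (i j : n) :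
    ‖V i j‖ ≤ 1 := by
  have h1 : (star V * V) j j = 1 := by
    rw [(Matrix.mem_unitaryGroup_iff'.mp hV)]; simp [Matrix.one_apply]
  have h1' : (∑ k, (Complex.normSq (V k j) : ℂ)) = 1 := by
    rw [← h1]; simp [Matrix.mul_apply, Matrix.star_apply, Complex.normSq_eq_conj_mul_self]
  have h2 : (∑ k, Complex.normSq (V k j) : ℝ) = 1 := by exact_mod_cast h1'
  have h3 : Complex.normSq (V i j) ≤ 1 := by
    rw [← h2]
    exact Finset.single_le_sum (f := fun k => Complex.normSq (V k j))
      (fun k _ => Complex.normSq_nonneg _) (Finset.mem_univ i)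
  rw [Complex.norm_def]
  exact Real.sqrt_le_one.mpr h3

lemma w_bound (V : Matrix (Fin 2) (Fin 2) ℂ) (hV : V ∈ Matrix.unitaryGroup (Fin 2) ℂ)
    (p : Fin 2 × Fin 2) :
    ‖(((1 : Matrix (Fin 2) (Fin 2) ℂ) ⊗ₖ V) *ᵥ psiPlus 2) p‖ ≤ 4 := by
  have h : (((1 : Matrix (Fin 2) (Fin 2) ℂ) ⊗ₖ V) *ᵥ psiPlus 2) p
      = ∑ q, ((1 : Matrix (Fin 2) (Fin 2) ℂ) ⊗ₖ V) p q * psiPlus 2 q := rfl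
  rw [h]
  refine le_trans (norm_sum_le _ _) ?_
  have hterm : ∀ q : Fin 2 × Fin 2,
      ‖((1 : Matrix (Fin 2) (Fin 2) ℂ) ⊗ₖ V) p q * psiPlus 2 q‖ ≤ 1 := by
    intro q
    rw [norm_mul]
    have h1 : ‖((1 : Matrix (Fin 2) (Fin 2) ℂ) ⊗ₖ V) p q‖ ≤ 1 := by
      rw [Matrix.kroneckerMap_apply, norm_mul]
      have h2 : ‖(1 : Matrix (Fin 2) (Fin 2) ℂ) p.1 q.1‖ ≤ 1 := by
        rw [Matrix.one_apply]; split <;> simp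
      exact mul_le_one₀ h2 (norm_nonneg _) (unitary_entry_le V hV _ _)
    exact mul_le_one₀ h1 (norm_nonneg _) (psi_entry_le q)
  refine le_trans (Finset.sum_le_sum fun q _ => hterm q) ?_
  simp

lemma fef_bdd (ρ : Matrix (Fin 2 × Fin 2) (Fin 2 × Fin 2) ℂ) :
    BddAbove (Set.range fun V : Matrix.unitaryGroup (Fin 2) ℂ =>
      (star (psiPlus 2) ⬝ᵥ
        ((((1 : Matrix (Fin 2) (Fin 2) ℂ) ⊗ₖ (V : Matrix (Fin 2) (Fin 2) ℂ))ᴴ * ρ *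
          ((1 : Matrix (Fin 2) (Fin 2) ℂ) ⊗ₖ (V : Matrix (Fin 2) (Fin 2) ℂ))) *ᵥ psiPlus 2)).re) := by
  refine ⟨(4:ℝ) ^ 2 * ∑ p, ∑ q, ‖ρ p q‖, ?_⟩
  rintro x ⟨V, rfl⟩
  simp only
  rw [conj_form]
  exact quad_bound ρ _ 4 (by norm_num) (w_bound V V.2)

noncomputable def Umat : Matrix (Fin 2 × Fin 2) (Fin 2 × Fin 2) ℂ :=
  fun p q =>
    if q = ((0 : Fin 2), (0 : Fin 2)) then (if p = (0,0) then cc else if p = (1,1) then cc else 0)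
    else if q = (1,1) then (if p = (0,0) then cc else if p = (1,1) then -cc else 0)
    else if p = q then 1 else 0

lemma Umat_mem : Umat ∈ Matrix.unitaryGroup (Fin 2 × Fin 2) ℂ := by
  rw [Matrix.mem_unitaryGroup_iff]
  ext p q
  have hc := cc_mul
  fin_cases p <;> fin_cases q <;>
    simp [Matrix.mul_apply, Fintype.sum_prod_type, Fin.sum_univ_succ, Umat, Matrix.one_apply,
      Matrix.star_apply, cc_star, Prod.ext_iff] <;>
    first | linear_combination hc | linear_combination 2*hc

lemma Umat_pull : Umatᴴ *ᵥ psiPlus 2 = ket 2 0 0 := by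
  funext p
  have hc := cc_mul
  fin_cases p <;>
    simp [Matrix.mulVec, dotProduct, Fintype.sum_prod_type, Fin.sum_univ_succ, Umat,
      Matrix.conjTranspose_apply, cc_star, psiPlus_eq_cc, ket, Prod.ext_iff] <;>
    linear_combination 2*hc

/-- Key step: any absolute-FEF density matrix has `σ₀₀ ≤ 1/2`. -/
lemma key_entry_bound (σ : Matrix (Fin 2 × Fin 2) (Fin 2 × Fin 2) ℂ)
    (hA : AbsFEF 2 σ) : (σ (0,0) (0,0)).re ≤ 1/2 := by
  have hfef := hA Umat Umat_mem
  have hle := le_ciSup (fef_bdd (Umat * σ * Umatᴴ)) (1 : Matrix.unitaryGroup (Fin 2) ℂ)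
  have hterm : (star (psiPlus 2) ⬝ᵥ
      ((((1 : Matrix (Fin 2) (Fin 2) ℂ) ⊗ₖ ((1 : Matrix.unitaryGroup (Fin 2) ℂ) :
          Matrix (Fin 2) (Fin 2) ℂ))ᴴ * (Umat * σ * Umatᴴ) *
        ((1 : Matrix (Fin 2) (Fin 2) ℂ) ⊗ₖ ((1 : Matrix.unitaryGroup (Fin 2) ℂ) :
          Matrix (Fin 2) (Fin 2) ℂ))) *ᵥ psiPlus 2)).re = (σ (0,0) (0,0)).re := by
    have hcoe : ((1 : Matrix.unitaryGroup (Fin 2) ℂ) : Matrix (Fin 2) (Fin 2) ℂ) = 1 := rfl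
    rw [hcoe, Matrix.one_kronecker_one, Matrix.conjTranspose_one, Matrix.one_mul,
      Matrix.mul_one]
    have h1 : star (psiPlus 2) ⬝ᵥ ((Umat * σ * Umatᴴ) *ᵥ psiPlus 2)
        = star (Umatᴴ *ᵥ psiPlus 2) ⬝ᵥ σ *ᵥ (Umatᴴ *ᵥ psiPlus 2) := by
      have h2 := conj_form Umatᴴ σ (psiPlus 2)
      rwa [Matrix.conjTranspose_conjTranspose] at h2
    rw [h1, Umat_pull]
    have h3 : star (ket 2 0 0) ⬝ᵥ σ *ᵥ ket 2 0 0 = σ (0,0) (0,0) := by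
      simp [ket, dotProduct, Matrix.mulVec, Fintype.sum_prod_type, Fin.sum_univ_succ,
        Prod.ext_iff]
    rw [h3]
  rw [hterm] at hle
  have : fef 2 (Umat * σ * Umatᴴ) ≤ 1/2 := by
    exact_mod_cast hfef
  calc (σ (0,0) (0,0)).re ≤ fef 2 (Umat * σ * Umatᴴ) := hle
    _ ≤ 1/2 := this

/-- Trace identity for `S₁` against a trace-one matrix. -/
lemma trace_S₁_eq (σ : Matrix (Fin 2 × Fin 2) (Fin 2 × Fin 2) ℂ) (htr : σ.trace = 1) :
    (S₁ * σ).trace = 1/2 - σ (0,0) (0,0) := by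
  have ht : σ 0 0 + σ (0,1) (0,1) + σ (1,0) (1,0) + σ 1 1 = 1 := by
    have h := htr
    simp [Matrix.trace, Matrix.diag, Fintype.sum_prod_type, Fin.sum_univ_succ] at h
    linear_combination h
  simp [Matrix.trace, Matrix.diag, Matrix.mul_apply, S₁, proj, ket, Matrix.vecMulVec_apply,
    Fintype.sum_prod_type, Fin.sum_univ_succ, Prod.ext_iff]
  linear_combination (1/2 : ℂ) * ht

lemma trace_S₁_X₁ : ((S₁ * X₁).trace) = -(1/6) := by
  have hc := cc_mul
  simp [Matrix.trace, Matrix.diag, Matrix.mul_apply, S₁, X₁, proj, ket, Matrix.vecMulVec_apply,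
    psiPlus_eq_cc, cc_star, Fintype.sum_prod_type, Fin.sum_univ_succ, Prod.ext_iff]
  ring

lemma X₁_density : IsDensityMatrix X₁ := by
  constructor
  · have h1 := smul_posSemidef (proj_posSemidef (psiPlus 2)) (c := 2/9) (by norm_num)
    have h2 := smul_posSemidef (proj_posSemidef (ket 2 0 1)) (c := 1/9) (by norm_num)
    have h3 := smul_posSemidef (proj_posSemidef (ket 2 1 0)) (c := 1/9) (by norm_num)
    have h4 := smul_posSemidef (proj_posSemidef (ket 2 0 0)) (c := 5/9) (by norm_num)
    have hsum := ((h1.add h2).add h3).add h4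
    have hX : X₁ = ((2/9:ℝ):ℂ) • proj (psiPlus 2) + ((1/9:ℝ):ℂ) • proj (ket 2 0 1) +
        ((1/9:ℝ):ℂ) • proj (ket 2 1 0) + ((5/9:ℝ):ℂ) • proj (ket 2 0 0) := by
      unfold X₁; norm_num
    rw [hX]; exact hsum
  · have hc := cc_mul
    simp [Matrix.trace, Matrix.diag, X₁, proj, ket, Matrix.vecMulVec_apply, psiPlus_eq_cc,
      cc_star, Fintype.sum_prod_type, Fin.sum_univ_succ, Prod.ext_iff]
    linear_combination (4/9 : ℂ) * hc

/-- `S₁` is a witness: nonnegative expectation on all of `𝔄𝔉₂`, while `Tr(S₁X₁) = −1/6 < 0`,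
hence `X₁ ∉ 𝔄𝔉₂`. -/
theorem S₁_witnesses_X₁ :
    (∀ σ : Matrix (Fin 2 × Fin 2) (Fin 2 × Fin 2) ℂ,
        IsDensityMatrix σ → AbsFEF 2 σ → 0 ≤ ((S₁ * σ).trace).re) ∧
      ((S₁ * X₁).trace).re = -(1/6) ∧ ((S₁ * X₁).trace).re < 0 ∧ ¬ AbsFEF 2 X₁ := by
  have hmain : ∀ σ : Matrix (Fin 2 × Fin 2) (Fin 2 × Fin 2) ℂ,
      IsDensityMatrix σ → AbsFEF 2 σ → 0 ≤ ((S₁ * σ).trace).re := by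
    intro σ hσ hA
    rw [trace_S₁_eq σ hσ.2]
    have h := key_entry_bound σ hA
    simp only [Complex.sub_re]
    have : ((1:ℂ)/2).re = 1/2 := by norm_num
    rw [this]
    linarith
  have hre : ((S₁ * X₁).trace).re = -(1/6) := by rw [trace_S₁_X₁]; norm_num
  refine ⟨hmain, hre, by rw [hre]; norm_num, ?_⟩
  intro hA
  have := hmain X₁ X₁_density hA
  rw [hre] at this
  linarith
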